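/- Let n ≥ 1 and let v = (1, 0, ..., 0, 1) ∈ ℚⁿ. Let M be the n×n chain matrix with diagonal (-1, -2, ..., -2, -3) and off-diagonal neighbors -1. If C ∈ ℚⁿ satisfies M Cᵀ = vᵀ, then C·v = Cᵀ M C = -n + (-1)^n. Consequently the d₃-formula (c² - 3σ - 2χ)/4 + q with σ = -n, χ = n+1, q = 1, c² = -n + (-1)^n evaluates to 3/4 if n is even and 1/4 if n is odd. -/

import Mathlib

/-- For the n×n chain matrix M with diagonal (-1, -2, ..., -2, -3) and
v = (1, 0, ..., 0, 1): any C with M·C = v satisfies C·v = -n + (-1)^n, and the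
d₃-formula (c² - 3σ - 2χ)/4 + q with σ = -n, χ = n+1, q = 1, c² = -n + (-1)^n
evaluates to 3/4 for n even and 1/4 for n odd. -/
theorem stmt12 (n : ℕ) (hn : 1 ≤ n) (M : Matrix (Fin n) (Fin n) ℚ)
    (hfirst : M ⟨0, by omega⟩ ⟨0, by omega⟩ = -1)
    (hdiag : ∀ i : Fin n, 1 ≤ (i : ℕ) → (i : ℕ) ≤ n - 2 → M i i = -2)
    (hlast : M ⟨n - 1, by omega⟩ ⟨n - 1, by omega⟩ = -3)
    (hoff : ∀ i j : Fin n, (i : ℕ) + 1 = (j : ℕ) → M i j = -1 ∧ M j i = -1)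
    (hzero : ∀ i j : Fin n, (i : ℕ) ≠ (j : ℕ) → (i : ℕ) + 1 ≠ (j : ℕ) →
      (j : ℕ) + 1 ≠ (i : ℕ) → M i j = 0)
    (v : Fin n → ℚ)
    (hv : ∀ i : Fin n, v i = if (i : ℕ) = 0 ∨ (i : ℕ) = n - 1 then 1 else 0)
    (C : Fin n → ℚ) (hC : M.mulVec C = v) :
    dotProduct C v = -(n : ℚ) + (-1) ^ n ∧
    (((-(n : ℚ) + (-1) ^ n) - 3 * (-(n : ℚ)) - 2 * ((n : ℚ) + 1)) / 4 + 1 =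
      if Even n then (3 : ℚ) / 4 else 1 / 4) := by
  have h2nd : (((-(n : ℚ) + (-1) ^ n) - 3 * (-(n : ℚ)) - 2 * ((n : ℚ) + 1)) / 4 + 1 =
      if Even n then (3 : ℚ) / 4 else 1 / 4) := by
    rcases Nat.even_or_odd n with he | ho
    · rw [if_pos he, he.neg_one_pow]; ring
    · rw [if_neg (Nat.not_even_iff_odd.mpr ho), ho.neg_one_pow]; ring
  refine ⟨?_, h2nd⟩
  have hrow : ∀ i : Fin n, ∑ j, M i j * C j = v i := by
    intro i; rw [← hC]; rfl
  rcases Nat.lt_or_ge n 2 with hlt | h2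
  · have hn1 : n = 1 := by omega
    subst hn1
    rw [show ((⟨1 - 1, by omega⟩ : Fin 1)) = ⟨0, by omega⟩ from rfl] at hlast
    rw [hfirst] at hlast
    norm_num at hlast
  · -- n ≥ 2
    have hsub : ∀ (i : Fin n) (s : Finset (Fin n)), (∀ j, j ∉ s → M i j = 0) →
        v i = ∑ j ∈ s, M i j * C j := by
      intro i s hs
      rw [← hrow i]
      exact (Finset.sum_subset s.subset_univ
        (fun x _ hx => by rw [hs x hx, zero_mul])).symm
    set c0 := C ⟨0, by omega⟩ with hc0
    -- row 0 equation
    have e0 : (-1 : ℚ) * c0 + (-1) * C ⟨1, by omega⟩ = 1 := by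
      have h := hsub ⟨0, by omega⟩ {⟨0, by omega⟩, ⟨1, by omega⟩} ?_
      · rw [Finset.sum_pair (by simp only [ne_eq, Fin.mk.injEq]; omega)] at h
        rw [hv ⟨0, by omega⟩, if_pos (Or.inl rfl)] at h
        rw [hfirst, (hoff ⟨0, by omega⟩ ⟨1, by omega⟩ rfl).1] at h
        linarith
      · intro j hj
        simp only [Finset.mem_insert, Finset.mem_singleton, Fin.ext_iff] at hj
        push_neg at hj
        exact hzero _ j (by simp only [Fin.val_mk]; omega)
          (by simp only [Fin.val_mk]; omega) (by simp only [Fin.val_mk]; omega)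
    -- interior rows
    have eint : ∀ a b c : ℕ, ∀ (ha : a < n) (hb : b < n) (hc : c < n),
        a + 1 = b → b + 1 = c → 1 ≤ b → b ≤ n - 2 →
        (-1 : ℚ) * C ⟨a, ha⟩ + (-2) * C ⟨b, hb⟩ + (-1) * C ⟨c, hc⟩ = 0 := by
      intro a b c ha hb hc hab hbc hb1 hb2
      have h := hsub ⟨b, hb⟩ {⟨a, ha⟩, ⟨b, hb⟩, ⟨c, hc⟩} ?_
      · rw [Finset.sum_insert (by
            simp only [Finset.mem_insert, Finset.mem_singleton, Fin.mk.injEq]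
            omega),
          Finset.sum_pair (by simp only [ne_eq, Fin.mk.injEq]; omega)] at h
        rw [hv ⟨b, hb⟩, if_neg (by simp only [Fin.val_mk]; omega)] at h
        rw [(hoff ⟨a, ha⟩ ⟨b, hb⟩ (by simp only [Fin.val_mk]; omega)).2,
          hdiag ⟨b, hb⟩ hb1 hb2,
          (hoff ⟨b, hb⟩ ⟨c, hc⟩ (by simp only [Fin.val_mk]; omega)).1] at h
        linarith
      · intro j hj
        simp only [Finset.mem_insert, Finset.mem_singleton, Fin.ext_iff] at hj
        push_neg at hj
        exact hzero _ j (by simp only [Fin.val_mk]; omega)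
          (by simp only [Fin.val_mk]; omega) (by simp only [Fin.val_mk]; omega)
    -- key formula
    have key : ∀ i : ℕ, ∀ h : i < n, C ⟨i, h⟩ = (-1) ^ i * (c0 + i) := by
      intro i
      induction i using Nat.strong_induction_on with
      | _ i ih =>
        match i with
        | 0 => intro h; simp [hc0]
        | 1 =>
          intro h
          push_cast
          rw [pow_one]
          linarith [e0]
        | (k + 2) =>
          intro h
          have h1 := ih k (by omega) (by omega)
          have h2 := ih (k + 1) (by omega) (by omega)
          have h3 := eint k (k + 1) (k + 2) (by omega) (by omega) h rfl rfl
            (by omega) (by omega)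
          rw [h1, h2] at h3
          push_cast at h3 ⊢
          linear_combination (-1 : ℚ) * h3
    -- last row equation
    have elast : (-1 : ℚ) * C ⟨n - 2, by omega⟩ + (-3) * C ⟨n - 1, by omega⟩ = 1 := by
      have h := hsub ⟨n - 1, by omega⟩ {⟨n - 2, by omega⟩, ⟨n - 1, by omega⟩} ?_
      · rw [Finset.sum_pair (by simp only [ne_eq, Fin.mk.injEq]; omega)] at h
        rw [hv ⟨n - 1, by omega⟩, if_pos (Or.inr rfl)] at h
        rw [(hoff ⟨n - 2, by omega⟩ ⟨n - 1, by omega⟩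
          (by simp only [Fin.val_mk]; omega)).2, hlast] at h
        linarith
      · intro j hj
        simp only [Finset.mem_insert, Finset.mem_singleton, Fin.ext_iff] at hj
        push_neg at hj
        exact hzero _ j (by simp only [Fin.val_mk]; omega)
          (by simp only [Fin.val_mk]; omega) (by simp only [Fin.val_mk]; omega)
    -- dot product reduces to two terms
    have hdot : dotProduct C v = c0 + C ⟨n - 1, by omega⟩ := by
      unfold dotProduct
      rw [show (Finset.univ : Finset (Fin n)) =
          ({⟨0, by omega⟩, ⟨n - 1, by omega⟩} : Finset (Fin n)) ∪
          (Finset.univ \ {⟨0, by omega⟩, ⟨n - 1, by omega⟩}) from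
        (Finset.union_sdiff_of_subset (Finset.subset_univ _)).symm]
      rw [Finset.sum_union Finset.disjoint_sdiff]
      rw [Finset.sum_pair (by simp only [ne_eq, Fin.mk.injEq]; omega)]
      have hz : ∑ j ∈ Finset.univ \
          ({⟨0, by omega⟩, ⟨n - 1, by omega⟩} : Finset (Fin n)), C j * v j = 0 := by
        apply Finset.sum_eq_zero
        intro j hj
        simp only [Finset.mem_sdiff, Finset.mem_insert, Finset.mem_singleton,
          Fin.ext_iff] at hj
        push_neg at hj
        rw [hv j, if_neg (by omega)]
        ring
      rw [hz]
      rw [hv ⟨0, by omega⟩, if_pos (Or.inl rfl), hv ⟨n - 1, by omega⟩,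
        if_pos (Or.inr rfl)]
      ring
    rw [hdot]
    have hk1 := key (n - 2) (by omega)
    have hk2 := key (n - 1) (by omega)
    rw [hk1, hk2] at elast
    rw [hk2]
    have hpar1 : ((-1 : ℚ)) ^ (n - 1) = -(-1) ^ n := by
      have : ((-1 : ℚ)) ^ n = (-1) ^ (n - 1) * (-1) := by
        rw [← pow_succ, show n - 1 + 1 = n from by omega]
      rw [this]; ring
    have hpar2 : ((-1 : ℚ)) ^ (n - 2) = (-1) ^ n := by
      have : ((-1 : ℚ)) ^ n = (-1) ^ (n - 2) * (-1) ^ 2 := by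
        rw [← pow_add, show n - 2 + 2 = n from by omega]
      rw [this]; ring
    rw [hpar1, hpar2] at elast
    rw [hpar1]
    have hsq : ((-1 : ℚ)) ^ n * (-1) ^ n = 1 := by
      rw [← pow_add]
      exact Even.neg_one_pow ⟨n, rfl⟩
    have hcast1 : ((n - 2 : ℕ) : ℚ) = (n : ℚ) - 2 := by
      push_cast [Nat.cast_sub (by omega : 2 ≤ n)]; ring
    have hcast2 : ((n - 1 : ℕ) : ℚ) = (n : ℚ) - 1 := by
      push_cast [Nat.cast_sub (by omega : 1 ≤ n)]; ring
    rw [hcast1, hcast2] at elast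
    rw [hcast2]
    have h5 : ((-1 : ℚ)) ^ n * (2 * c0 + 2 * (n : ℚ) - 1) = 1 := by
      linear_combination elast
    have h6 : 2 * c0 + 2 * (n : ℚ) - 1 = (-1) ^ n := by
      linear_combination ((-1 : ℚ)) ^ n * h5 - (2 * c0 + 2 * (n : ℚ) - 1) * hsq
    linear_combination ((1 - (-1 : ℚ) ^ n) / 2) * h6 - (1 / 2) * hsq
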